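/- The 6×6 matrix B with rows (1,2,3,4,5,6), (2,4,6,1,3,5), (3,6,2,5,1,4), (4,1,5,2,6,3), (5,3,1,6,4,2), (6,5,4,3,2,1) is harmonic and is not isomorphic to A_μ^(6) with rows (1,2,3,4,5,6), (2,4,1,6,3,5), (3,1,5,2,6,4), (4,6,2,5,1,3), (5,3,6,1,4,2), (6,5,4,3,2,1): there exist no permutations σ, τ ∈ S_6 with B(τ(i), j) = σ(A(i,j)) for all i, j. -/
import Mathlib


/-- `M` (1-indexed, entries in `{1,…,n}`) is a harmonic matrix of order `n`:
each row is a permutation of `{1,…,n}` and each directed pair `(a,b)`, `a ≠ b`,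
occurs exactly once as a horizontally adjacent pair. -/
def IsHarmonic (n : ℕ) (M : ℕ → ℕ → ℕ) : Prop :=
  (∀ i ∈ Finset.Icc 1 n, ∀ v ∈ Finset.Icc 1 n,
      ∃! j, j ∈ Finset.Icc 1 n ∧ M i j = v) ∧
  (∀ a ∈ Finset.Icc 1 n, ∀ b ∈ Finset.Icc 1 n, a ≠ b →
      ∃! p : ℕ × ℕ, p.1 ∈ Finset.Icc 1 n ∧ p.2 ∈ Finset.Icc 1 (n - 1) ∧
        M p.1 p.2 = a ∧ M p.1 (p.2 + 1) = b)

def A6 : ℕ → ℕ → ℕ := fun i j =>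
  (([[1,2,3,4,5,6],[2,4,1,6,3,5],[3,1,5,2,6,4],
     [4,6,2,5,1,3],[5,3,6,1,4,2],[6,5,4,3,2,1]] : List (List ℕ)).getD (i-1) []).getD (j-1) 0

def B6 : ℕ → ℕ → ℕ := fun i j =>
  (([[1,2,3,4,5,6],[2,4,6,1,3,5],[3,6,2,5,1,4],
     [4,1,5,2,6,3],[5,3,1,6,4,2],[6,5,4,3,2,1]] : List (List ℕ)).getD (i-1) []).getD (j-1) 0

lemma key1 : ∀ i ∈ Finset.Icc 1 6, ∀ v ∈ Finset.Icc 1 6,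
    ∃ j ∈ Finset.Icc 1 6, B6 i j = v ∧ ∀ k ∈ Finset.Icc 1 6, B6 i k = v → k = j := by
  decide

lemma key2 : ∀ a ∈ Finset.Icc 1 6, ∀ b ∈ Finset.Icc 1 6, a ≠ b →
    ∃ p ∈ Finset.Icc 1 6 ×ˢ Finset.Icc 1 5,
      (B6 p.1 p.2 = a ∧ B6 p.1 (p.2 + 1) = b) ∧
      ∀ q ∈ Finset.Icc 1 6 ×ˢ Finset.Icc 1 5,
        (B6 q.1 q.2 = a ∧ B6 q.1 (q.2 + 1) = b) → q = p := by
  decide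

lemma key3 : ¬ ∃ r1 ∈ Finset.Icc 1 6, ∃ r2 ∈ Finset.Icc 1 6,
    ∀ j ∈ Finset.Icc 1 6, B6 r2 j = B6 r1 (A6 2 j) := by
  decide

lemma keyA1 : ∀ j ∈ Finset.Icc 1 6, A6 1 j = j := by decide

lemma keyA2 : ∀ j ∈ Finset.Icc 1 6, A6 2 j ∈ Finset.Icc 1 6 := by decide

lemma mem_iff (x : ℕ) : x ∈ Set.Icc 1 6 ↔ x ∈ Finset.Icc 1 6 := by
  simp

/-- `B6` is harmonic and not isomorphic to `A_μ^(6)`: no global relabeling `σ`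
together with a row permutation `τ` transforms `A6` into `B6`. -/
theorem B6_harmonic_not_iso_A6 :
    IsHarmonic 6 B6 ∧
    ¬ ∃ σ τ : ℕ → ℕ,
        Set.BijOn σ (Set.Icc 1 6) (Set.Icc 1 6) ∧
        Set.BijOn τ (Set.Icc 1 6) (Set.Icc 1 6) ∧
        ∀ i ∈ Set.Icc 1 6, ∀ j ∈ Set.Icc 1 6, B6 (τ i) j = σ (A6 i j) := by
  constructor
  · constructor
    · intro i hi v hv
      obtain ⟨j, hj, hval, huniq⟩ := key1 i hi v hv
      exact ⟨j, ⟨hj, hval⟩, fun k ⟨hk, hkv⟩ => huniq k hk hkv⟩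
    · intro a ha b hb hab
      obtain ⟨p, hp, hval, huniq⟩ := key2 a ha b hb hab
      rw [Finset.mem_product] at hp
      refine ⟨p, ⟨hp.1, by simpa using hp.2, hval.1, hval.2⟩, ?_⟩
      intro q ⟨hq1, hq2, hqa, hqb⟩
      exact huniq q (Finset.mem_product.mpr ⟨hq1, by simpa using hq2⟩) ⟨hqa, hqb⟩
  · rintro ⟨σ, τ, hσ, hτ, h⟩
    have h1 : (1 : ℕ) ∈ Set.Icc (1:ℕ) 6 := by norm_num
    have h2 : (2 : ℕ) ∈ Set.Icc (1:ℕ) 6 := by norm_num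
    have hτ1 : τ 1 ∈ Finset.Icc 1 6 := (mem_iff _).mp (hτ.mapsTo h1)
    have hτ2 : τ 2 ∈ Finset.Icc 1 6 := (mem_iff _).mp (hτ.mapsTo h2)
    -- σ x = B6 (τ 1) x for x ∈ Icc 1 6
    have hσ' : ∀ x ∈ Finset.Icc 1 6, σ x = B6 (τ 1) x := by
      intro x hx
      have := h 1 h1 x ((mem_iff x).mpr hx)
      rw [keyA1 x hx] at this
      exact this.symm
    apply key3
    refine ⟨τ 1, hτ1, τ 2, hτ2, fun j hj => ?_⟩
    have := h 2 h2 j ((mem_iff j).mpr hj)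
    rw [hσ' (A6 2 j) (keyA2 j hj)] at this
    exact this
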